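/- On the Lie algebra su(2) ⊕ ℝ² as above (de¹ = de⁴ = 0, de² = -3e³⁵, de³ = 3e²⁵, de⁵ = -4e²³), the family η(t) = e⁵, ω₂(t) = cos(√3 t)(e¹³ + e⁴²), ω₁(t) = cos(√3 t)(e¹² + e³⁴) - (√3/2)sin(2√3 t)e¹⁴ + (1/(2√3))sin(2√3 t)e²³, ω₃(t) = (1/√3)sin(√3 t)(e¹² + e³⁴) + cos(2√3 t)e¹⁴ + (4/3 - (1/3)cos(2√3 t))e²³ solves the nearly hypo evolution equations ∂ₜω₁ = -dη - 3ω₃, ∂ₜ(η∧ω₃) = dω₂ + 4η∧ω₁, ∂ₜ(η∧ω₂) = -dω₃. -/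

import Mathlib

open Real

private lemma cyc3 {A : Type*} [Ring A] (x y z : A) (hxz : x*z = -(z*x)) (hyz : y*z = -(z*y)) :
    x*(y*z) = z*(x*y) := by
  rw [hyz, mul_neg, ← mul_assoc, hxz, neg_mul, neg_neg, mul_assoc]

theorem nearlyHypo_evolution_solution {A : Type*} [NormedRing A] [NormedAlgebra ℝ A]
    (d : A →ₗ[ℝ] A) (e₁ e₂ e₃ e₄ e₅ : A)
    -- the 1-forms anticommute
    (hanti : ∀ x ∈ ({e₁, e₂, e₃, e₄, e₅} : Set A), ∀ y ∈ ({e₁, e₂, e₃, e₄, e₅} : Set A),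
      x * y = -(y * x))
    -- antiderivation property on products of 1-forms and of a 1-form with a 2-form
    (hL2 : ∀ x ∈ ({e₁, e₂, e₃, e₄, e₅} : Set A), ∀ y ∈ ({e₁, e₂, e₃, e₄, e₅} : Set A),
      d (x * y) = d x * y - x * d y)
    (hL12 : ∀ x ∈ ({e₁, e₂, e₃, e₄, e₅} : Set A), ∀ y ∈ ({e₁, e₂, e₃, e₄, e₅} : Set A),
      ∀ z ∈ ({e₁, e₂, e₃, e₄, e₅} : Set A),
      d (x * (y * z)) = d x * (y * z) - x * d (y * z))
    -- structure equations (μ = 0)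
    (h1 : d e₁ = 0)
    (h2 : d e₂ = (-3 : ℝ) • (e₃ * e₅))
    (h3 : d e₃ = (3 : ℝ) • (e₂ * e₅))
    (h4 : d e₄ = 0)
    (h5 : d e₅ = (-4 : ℝ) • (e₂ * e₃)) :
    -- ∂ₜω₁(t) = -dη - 3ω₃(t)
    (∀ t : ℝ, deriv (fun s : ℝ =>
          cos (Real.sqrt 3 * s) • (e₁ * e₂ + e₃ * e₄)
          - (Real.sqrt 3 / 2 * sin (2 * Real.sqrt 3 * s)) • (e₁ * e₄)
          + (1 / (2 * Real.sqrt 3) * sin (2 * Real.sqrt 3 * s)) • (e₂ * e₃)) t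
        = -d e₅ - (3 : ℝ) •
            ((1 / Real.sqrt 3 * sin (Real.sqrt 3 * t)) • (e₁ * e₂ + e₃ * e₄)
              + cos (2 * Real.sqrt 3 * t) • (e₁ * e₄)
              + (4 / 3 - 1 / 3 * cos (2 * Real.sqrt 3 * t)) • (e₂ * e₃))) ∧
    -- ∂ₜ(η∧ω₃(t)) = dω₂(t) + 4η∧ω₁(t)
    (∀ t : ℝ, deriv (fun s : ℝ =>
          e₅ * ((1 / Real.sqrt 3 * sin (Real.sqrt 3 * s)) • (e₁ * e₂ + e₃ * e₄)
            + cos (2 * Real.sqrt 3 * s) • (e₁ * e₄)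
            + (4 / 3 - 1 / 3 * cos (2 * Real.sqrt 3 * s)) • (e₂ * e₃))) t
        = d (cos (Real.sqrt 3 * t) • (e₁ * e₃ + e₄ * e₂))
          + (4 : ℝ) • (e₅ *
              (cos (Real.sqrt 3 * t) • (e₁ * e₂ + e₃ * e₄)
                - (Real.sqrt 3 / 2 * sin (2 * Real.sqrt 3 * t)) • (e₁ * e₄)
                + (1 / (2 * Real.sqrt 3) * sin (2 * Real.sqrt 3 * t)) • (e₂ * e₃)))) ∧
    -- ∂ₜ(η∧ω₂(t)) = -dω₃(t)
    (∀ t : ℝ, deriv (fun s : ℝ =>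
          e₅ * (cos (Real.sqrt 3 * s) • (e₁ * e₃ + e₄ * e₂))) t
        = -d ((1 / Real.sqrt 3 * sin (Real.sqrt 3 * t)) • (e₁ * e₂ + e₃ * e₄)
            + cos (2 * Real.sqrt 3 * t) • (e₁ * e₄)
            + (4 / 3 - 1 / 3 * cos (2 * Real.sqrt 3 * t)) • (e₂ * e₃))) := by
  have m1 : e₁ ∈ ({e₁, e₂, e₃, e₄, e₅} : Set A) := by simp
  have m2 : e₂ ∈ ({e₁, e₂, e₃, e₄, e₅} : Set A) := by simp
  have m3 : e₃ ∈ ({e₁, e₂, e₃, e₄, e₅} : Set A) := by simp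
  have m4 : e₄ ∈ ({e₁, e₂, e₃, e₄, e₅} : Set A) := by simp
  have m5 : e₅ ∈ ({e₁, e₂, e₃, e₄, e₅} : Set A) := by simp
  -- squares vanish
  have sq : ∀ x ∈ ({e₁, e₂, e₃, e₄, e₅} : Set A), x * x = 0 := by
    intro x hx
    have h := hanti x hx x hx
    have h2 : (2:ℝ) • (x*x) = 0 := by
      rw [two_smul]; nth_rw 2 [h]; exact add_neg_cancel _
    calc x*x = ((2:ℝ)⁻¹ * 2) • (x*x) := by norm_num
    _ = (2:ℝ)⁻¹ • ((2:ℝ) • (x*x)) := mul_smul _ _ _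
    _ = 0 := by rw [h2, smul_zero]
  -- product rearrangements
  have k1 : e₁*(e₂*e₅) = e₅*(e₁*e₂) :=
    cyc3 _ _ _ (hanti e₁ m1 e₅ m5) (hanti e₂ m2 e₅ m5)
  have k2 : e₄*(e₃*e₅) = -(e₅*(e₃*e₄)) := by
    rw [cyc3 _ _ _ (hanti e₄ m4 e₅ m5) (hanti e₃ m3 e₅ m5), hanti e₄ m4 e₃ m3, mul_neg]
  have k3 : e₁*(e₃*e₅) = e₅*(e₁*e₃) :=
    cyc3 _ _ _ (hanti e₁ m1 e₅ m5) (hanti e₃ m3 e₅ m5)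
  have k4 : (e₂*e₅)*e₄ = e₅*(e₄*e₂) := by
    rw [mul_assoc, cyc3 e₂ e₅ e₄ (hanti e₂ m2 e₄ m4) (hanti e₅ m5 e₄ m4),
      cyc3 e₄ e₂ e₅ (hanti e₄ m4 e₅ m5) (hanti e₂ m2 e₅ m5)]
  -- d on the relevant 2-forms
  have d12 : d (e₁*e₂) = (3:ℝ) • (e₅*(e₁*e₃)) := by
    rw [hL2 e₁ m1 e₂ m2, h1, h2, zero_mul, mul_smul_comm, k3]; module
  have d34 : d (e₃*e₄) = (3:ℝ) • (e₅*(e₄*e₂)) := by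
    rw [hL2 e₃ m3 e₄ m4, h3, h4, mul_zero, smul_mul_assoc, k4]; module
  have d13 : d (e₁*e₃) = (-3:ℝ) • (e₅*(e₁*e₂)) := by
    rw [hL2 e₁ m1 e₃ m3, h1, h3, zero_mul, mul_smul_comm, k1]; module
  have d42 : d (e₄*e₂) = (-3:ℝ) • (e₅*(e₃*e₄)) := by
    rw [hL2 e₄ m4 e₂ m2, h4, h2, zero_mul, mul_smul_comm, k2]; module
  have d14 : d (e₁*e₄) = 0 := by
    rw [hL2 e₁ m1 e₄ m4, h1, h4, zero_mul, mul_zero, sub_zero]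
  have d23 : d (e₂*e₃) = 0 := by
    have p1 : (e₃*e₅)*e₃ = 0 := by
      rw [mul_assoc, hanti e₅ m5 e₃ m3, mul_neg, ← mul_assoc, sq e₃ m3, zero_mul, neg_zero]
    have p2 : e₂*(e₂*e₅) = 0 := by rw [← mul_assoc, sq e₂ m2, zero_mul]
    rw [hL2 e₂ m2 e₃ m3, h2, h3, smul_mul_assoc, p1, mul_smul_comm, p2]; module
  -- calculus helpers
  have r3 : Real.sqrt 3 * Real.sqrt 3 = 3 := Real.mul_self_sqrt (by norm_num)
  have r0 : Real.sqrt 3 ≠ 0 := by positivity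
  have r3' : Real.sqrt 3 ^ 2 = 3 := Real.sq_sqrt (by norm_num)
  have hlin : ∀ (a t : ℝ), HasDerivAt (fun s : ℝ => a * s) a t := fun a t => by
    simpa using (hasDerivAt_id t).const_mul a
  have hcos : ∀ (a t : ℝ), HasDerivAt (fun s => cos (a*s)) (-sin (a*t) * a) t := fun a t =>
    (Real.hasDerivAt_cos _).comp t (hlin a t)
  have hsin : ∀ (a t : ℝ), HasDerivAt (fun s => sin (a*s)) (cos (a*t) * a) t := fun a t =>
    (Real.hasDerivAt_sin _).comp t (hlin a t)
  refine ⟨fun t => ?_, fun t => ?_, fun t => ?_⟩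
  · -- part 1
    have H : HasDerivAt (fun s : ℝ =>
        cos (Real.sqrt 3 * s) • (e₁ * e₂ + e₃ * e₄)
        - (Real.sqrt 3 / 2 * sin (2 * Real.sqrt 3 * s)) • (e₁ * e₄)
        + (1 / (2 * Real.sqrt 3) * sin (2 * Real.sqrt 3 * s)) • (e₂ * e₃))
        ((-sin (Real.sqrt 3 * t) * Real.sqrt 3) • (e₁ * e₂ + e₃ * e₄)
        - (Real.sqrt 3 / 2 * (cos (2 * Real.sqrt 3 * t) * (2 * Real.sqrt 3))) • (e₁ * e₄)
        + (1 / (2 * Real.sqrt 3) * (cos (2 * Real.sqrt 3 * t) * (2 * Real.sqrt 3))) • (e₂ * e₃)) t :=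
      (((hcos _ t).smul_const _).sub (((hsin _ t).const_mul _).smul_const _)).add
        (((hsin _ t).const_mul _).smul_const _)
    rw [H.deriv, h5]
    match_scalars
    all_goals field_simp
    all_goals (first
      | ring1
      | linear_combination sin (Real.sqrt 3 * t) * r3
      | linear_combination (-sin (Real.sqrt 3 * t)) * r3
      | linear_combination 2 * sin (Real.sqrt 3 * t) * r3
      | linear_combination (-2 * sin (Real.sqrt 3 * t)) * r3
      | linear_combination cos (2 * Real.sqrt 3 * t) * r3
      | linear_combination (-cos (2 * Real.sqrt 3 * t)) * r3
      | linear_combination 3 * cos (2 * Real.sqrt 3 * t) * r3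
      | linear_combination (-3 * cos (2 * Real.sqrt 3 * t)) * r3
      | linear_combination sin (2 * Real.sqrt 3 * t) * r3
      | linear_combination (-sin (2 * Real.sqrt 3 * t)) * r3
      | linear_combination 2 * sin (2 * Real.sqrt 3 * t) * r3
      | linear_combination (-2 * sin (2 * Real.sqrt 3 * t)) * r3
      | linear_combination 4 * sin (2 * Real.sqrt 3 * t) * r3
      | linear_combination (-4 * sin (2 * Real.sqrt 3 * t)) * r3
      | linear_combination sin (Real.sqrt 3 * t) * r3'
      | linear_combination (-sin (Real.sqrt 3 * t)) * r3'
      | linear_combination cos (Real.sqrt 3 * t * 2) * 2 * r3'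
      | linear_combination (-cos (Real.sqrt 3 * t * 2) * 2) * r3'
      | linear_combination sin (Real.sqrt 3 * t * 2) * 4 * r3'
      | linear_combination (-sin (Real.sqrt 3 * t * 2) * 4) * r3'
      | linear_combination 2 * cos (2 * Real.sqrt 3 * t) * r3'
      | linear_combination (-2 * cos (2 * Real.sqrt 3 * t)) * r3'
      | linear_combination 4 * sin (2 * Real.sqrt 3 * t) * r3'
      | linear_combination (-4 * sin (2 * Real.sqrt 3 * t)) * r3'
      | linear_combination (2 * cos (2 * Real.sqrt 3 * t) + 4 * sin (Real.sqrt 3 * t * 2)) * r3'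
      | linear_combination (2 * cos (2 * Real.sqrt 3 * t) + 4 * sin (2 * Real.sqrt 3 * t)) * r3'
        | linear_combination (-cos (Real.sqrt 3 * 2 * t)) * r3')
  · -- part 2
    have HG : HasDerivAt (fun s : ℝ =>
        (1 / Real.sqrt 3 * sin (Real.sqrt 3 * s)) • (e₁ * e₂ + e₃ * e₄)
        + cos (2 * Real.sqrt 3 * s) • (e₁ * e₄)
        + (4 / 3 - 1 / 3 * cos (2 * Real.sqrt 3 * s)) • (e₂ * e₃))
        ((1 / Real.sqrt 3 * (cos (Real.sqrt 3 * t) * Real.sqrt 3)) • (e₁ * e₂ + e₃ * e₄)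
        + (-sin (2 * Real.sqrt 3 * t) * (2 * Real.sqrt 3)) • (e₁ * e₄)
        + (0 - 1 / 3 * (-sin (2 * Real.sqrt 3 * t) * (2 * Real.sqrt 3))) • (e₂ * e₃)) t :=
      ((((hsin _ t).const_mul _).smul_const _).add ((hcos _ t).smul_const _)).add
        (((hasDerivAt_const t _).sub ((hcos _ t).const_mul _)).smul_const _)
    rw [(HG.const_mul e₅).deriv, map_smul, map_add, d13, d42]
    simp only [mul_add, mul_sub, mul_smul_comm, smul_add, smul_sub, smul_smul]
    match_scalars
    all_goals field_simp
    all_goals (first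
      | ring1
      | linear_combination sin (Real.sqrt 3 * t) * r3
      | linear_combination (-sin (Real.sqrt 3 * t)) * r3
      | linear_combination 2 * sin (Real.sqrt 3 * t) * r3
      | linear_combination (-2 * sin (Real.sqrt 3 * t)) * r3
      | linear_combination cos (2 * Real.sqrt 3 * t) * r3
      | linear_combination (-cos (2 * Real.sqrt 3 * t)) * r3
      | linear_combination 3 * cos (2 * Real.sqrt 3 * t) * r3
      | linear_combination (-3 * cos (2 * Real.sqrt 3 * t)) * r3
      | linear_combination sin (2 * Real.sqrt 3 * t) * r3
      | linear_combination (-sin (2 * Real.sqrt 3 * t)) * r3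
      | linear_combination 2 * sin (2 * Real.sqrt 3 * t) * r3
      | linear_combination (-2 * sin (2 * Real.sqrt 3 * t)) * r3
      | linear_combination 4 * sin (2 * Real.sqrt 3 * t) * r3
      | linear_combination (-4 * sin (2 * Real.sqrt 3 * t)) * r3
      | linear_combination sin (Real.sqrt 3 * t) * r3'
      | linear_combination (-sin (Real.sqrt 3 * t)) * r3'
      | linear_combination cos (Real.sqrt 3 * t * 2) * 2 * r3'
      | linear_combination (-cos (Real.sqrt 3 * t * 2) * 2) * r3'
      | linear_combination sin (Real.sqrt 3 * t * 2) * 4 * r3'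
      | linear_combination (-sin (Real.sqrt 3 * t * 2) * 4) * r3'
      | linear_combination 2 * cos (2 * Real.sqrt 3 * t) * r3'
      | linear_combination (-2 * cos (2 * Real.sqrt 3 * t)) * r3'
      | linear_combination 4 * sin (2 * Real.sqrt 3 * t) * r3'
      | linear_combination (-4 * sin (2 * Real.sqrt 3 * t)) * r3'
      | linear_combination (2 * cos (2 * Real.sqrt 3 * t) + 4 * sin (Real.sqrt 3 * t * 2)) * r3'
      | linear_combination (2 * cos (2 * Real.sqrt 3 * t) + 4 * sin (2 * Real.sqrt 3 * t)) * r3')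
  · -- part 3
    have H := (((hcos (Real.sqrt 3) t).smul_const (e₁ * e₃ + e₄ * e₂)).const_mul e₅)
    rw [H.deriv, map_add, map_add, map_smul, map_smul, map_smul, map_add, d12, d34, d14, d23]
    simp only [mul_add, mul_smul_comm, smul_add, smul_smul, smul_zero, add_zero]
    match_scalars
    all_goals field_simp
    all_goals (first
      | ring1
      | linear_combination sin (Real.sqrt 3 * t) * r3
      | linear_combination (-sin (Real.sqrt 3 * t)) * r3
      | linear_combination 2 * sin (Real.sqrt 3 * t) * r3
      | linear_combination (-2 * sin (Real.sqrt 3 * t)) * r3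
      | linear_combination cos (2 * Real.sqrt 3 * t) * r3
      | linear_combination (-cos (2 * Real.sqrt 3 * t)) * r3
      | linear_combination 3 * cos (2 * Real.sqrt 3 * t) * r3
      | linear_combination (-3 * cos (2 * Real.sqrt 3 * t)) * r3
      | linear_combination sin (2 * Real.sqrt 3 * t) * r3
      | linear_combination (-sin (2 * Real.sqrt 3 * t)) * r3
      | linear_combination 2 * sin (2 * Real.sqrt 3 * t) * r3
      | linear_combination (-2 * sin (2 * Real.sqrt 3 * t)) * r3
      | linear_combination 4 * sin (2 * Real.sqrt 3 * t) * r3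
      | linear_combination (-4 * sin (2 * Real.sqrt 3 * t)) * r3
      | linear_combination sin (Real.sqrt 3 * t) * r3'
      | linear_combination (-sin (Real.sqrt 3 * t)) * r3'
      | linear_combination cos (Real.sqrt 3 * t * 2) * 2 * r3'
      | linear_combination (-cos (Real.sqrt 3 * t * 2) * 2) * r3'
      | linear_combination sin (Real.sqrt 3 * t * 2) * 4 * r3'
      | linear_combination (-sin (Real.sqrt 3 * t * 2) * 4) * r3'
      | linear_combination 2 * cos (2 * Real.sqrt 3 * t) * r3'
      | linear_combination (-2 * cos (2 * Real.sqrt 3 * t)) * r3'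
      | linear_combination 4 * sin (2 * Real.sqrt 3 * t) * r3'
      | linear_combination (-4 * sin (2 * Real.sqrt 3 * t)) * r3'
      | linear_combination (2 * cos (2 * Real.sqrt 3 * t) + 4 * sin (Real.sqrt 3 * t * 2)) * r3'
      | linear_combination (2 * cos (2 * Real.sqrt 3 * t) + 4 * sin (2 * Real.sqrt 3 * t)) * r3')
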